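/- Let A be an alphabet of size N ≥ 3, σ a cyclic permutation of A, and δ = σ^j with 1 ≤ j < N and j ≢ 1 (mod N). Then the infinite word W = lim_n ψ^n(a_0), where ψ(a) = a σ(a), is strongly (3, δ)-free: no factor of W has the form X X^(δ) X^(δ²) with X nonempty. -/

import Mathlib

/-- Letterwise application of the permutation δ (the δ-twisted form). -/
def twist {A : Type*} (δ : Equiv.Perm A) (w : List A) : List A := w.map δ

/-- The cyclic shift morphism ψ(a) = a σ(a), extended to words. -/
def psi {A : Type*} (σ : Equiv.Perm A) (w : List A) : List A :=
  w.flatMap (fun a => [a, σ a])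

/-- The infinite fixed point W = lim_n ψ^n(a₀). -/
def Wfix {A : Type*} (σ : Equiv.Perm A) (a₀ : A) (n : ℕ) : A :=
  ((psi σ)^[n + 1] [a₀]).getD n a₀

/-- A finite word u is a factor of an infinite word W if it occurs in W at some position. -/
def IsFactorOf {A : Type*} (u : List A) (W : ℕ → A) : Prop :=
  ∃ i : ℕ, u = (List.range u.length).map (fun k => W (i + k))

/-! ### Auxiliary machinery -/

/-- Binary digit sum. -/
def dsum : ℕ → ℕ
  | 0 => 0
  | n+1 => dsum ((n+1)/2) + (n+1) % 2
decreasing_by exact Nat.div_lt_self (Nat.succ_pos n) one_lt_two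

lemma dsum_eq (n : ℕ) (h : n ≠ 0) : dsum n = dsum (n/2) + n % 2 := by
  cases n with
  | zero => exact absurd rfl h
  | succ m => simp [dsum]

lemma dsum_two_mul (n : ℕ) : dsum (2*n) = dsum n := by
  cases n with
  | zero => rfl
  | succ m =>
    rw [dsum_eq (2*(m+1)) (by omega)]
    have h1 : 2*(m+1)/2 = m+1 := by omega
    have h2 : 2*(m+1) % 2 = 0 := by omega
    simp [h1, h2]

lemma dsum_two_mul_add_one (n : ℕ) : dsum (2*n+1) = dsum n + 1 := by
  rw [dsum_eq (2*n+1) (by omega)]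
  have h1 : (2*n+1)/2 = n := by omega
  have h2 : (2*n+1) % 2 = 1 := by omega
  rw [h1, h2]

lemma psi_cons {A : Type*} (σ : Equiv.Perm A) (a : A) (l : List A) :
    psi σ (a :: l) = a :: σ a :: psi σ l := rfl

lemma psi_getElem? {A : Type*} (σ : Equiv.Perm A) : ∀ (l : List A) (t : ℕ),
    (psi σ l)[2*t]? = l[t]? ∧ (psi σ l)[2*t+1]? = l[t]?.map σ := by
  intro l
  induction l with
  | nil => intro t; simp [psi]
  | cons a l ih =>
    intro t
    cases t with
    | zero => simp [psi_cons]
    | succ s =>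
      rw [psi_cons]
      have e1 : 2*(s+1) = (2*s)+1+1 := by omega
      rw [e1]
      simpa using ih s

lemma iterate_getElem? {A : Type*} (σ : Equiv.Perm A) (a₀ : A) :
    ∀ m k, k < 2^m → ((psi σ)^[m] [a₀])[k]? = some ((σ^(dsum k)) a₀) := by
  intro m
  induction m with
  | zero =>
    intro k hk
    interval_cases k
    simp [dsum]
  | succ m ih =>
    intro k hk
    rw [Function.iterate_succ_apply']
    rcases Nat.even_or_odd k with ⟨t, ht⟩ | ⟨t, ht⟩
    · have ht' : k = 2*t := by omega
      have htlt : t < 2^m := by rw [pow_succ] at hk; omega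
      rw [ht', (psi_getElem? σ _ t).1, ih t htlt, dsum_two_mul]
    · have htlt : t < 2^m := by rw [pow_succ] at hk; omega
      rw [ht, (psi_getElem? σ _ t).2, ih t htlt, dsum_two_mul_add_one]
      rw [pow_succ', Equiv.Perm.mul_apply, Option.map_some]

lemma Wfix_eq {A : Type*} (σ : Equiv.Perm A) (a₀ : A) (n : ℕ) :
    Wfix σ a₀ n = (σ^(dsum n)) a₀ := by
  have h := iterate_getElem? σ a₀ (n+1) n
    (lt_of_lt_of_le (Nat.lt_two_pow_self (n := n)) (Nat.pow_le_pow_right (by norm_num) (by omega)))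
  unfold Wfix
  rw [List.getD_eq_getElem?_getD, h]
  rfl

/-- The core combinatorial lemma about the digit-sum sequence mod N. -/
lemma core (N : ℕ) (hN3 : 3 ≤ N) (g : ℕ → ZMod N)
    (hg0 : ∀ n, g (2*n) = g n) (hg1 : ∀ n, g (2*n+1) = g n + 1)
    (jz : ZMod N) (hjz : jz ≠ 1) :
    ∀ m, 1 ≤ m → ∀ i, ¬ (∀ k, k < 2*m → g (i + m + k) = g (i + k) + jz) := by
  have h21 : (2 : ZMod N) ≠ 1 := by
    intro h
    have h' : ((2:ℕ) : ZMod N) = ((1:ℕ) : ZMod N) := by push_cast; exact h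
    rw [ZMod.natCast_eq_natCast_iff] at h'
    have hd := (Nat.modEq_iff_dvd' (by norm_num)).mp h'.symm
    have := Nat.le_of_dvd (by norm_num) hd
    omega
  intro m
  induction m using Nat.strong_induction_on with
  | _ m IH =>
    intro hm i H
    rcases Nat.lt_or_ge m 2 with hm1 | hm2
    · -- m = 1
      have hm' : m = 1 := by omega
      subst hm'
      rcases Nat.even_or_odd i with ⟨t, ht⟩ | ⟨t, ht⟩
      · have h0 := H 0 (by omega)
        rw [show i + 1 + 0 = 2*t+1 by omega, show i + 0 = 2*t by omega, hg0, hg1] at h0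
        exact hjz (add_left_cancel h0).symm
      · have h1 := H 1 (by omega)
        rw [show i + 1 + 1 = 2*(t+1)+1 by omega, show i + 1 = 2*(t+1) by omega, hg0, hg1] at h1
        exact hjz (add_left_cancel h1).symm
    rcases Nat.even_or_odd m with ⟨m', hm'⟩ | ⟨p, hp⟩
    · -- m = 2m' even
      have hm'' : m = 2*m' := by omega
      obtain ⟨i', hi'⟩ : ∃ i', i ≤ 2*i' ∧ 2*i' ≤ i + 1 := ⟨(i+1)/2, by omega⟩
      refine IH m' (by omega) (by omega) i' ?_
      intro k hk
      have hk0 : 2*(i'+k) - i < 2*m := by omega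
      have h := H (2*(i'+k) - i) hk0
      rw [show i + m + (2*(i'+k) - i) = 2*(i' + m' + k) by omega,
          show i + (2*(i'+k) - i) = 2*(i'+k) by omega, hg0, hg0] at h
      exact h
    · -- m = 2p+1 odd, p ≥ 1
      have hp1 : 1 ≤ p := by omega
      have R1 : ∀ t, i ≤ 2*t → 2*t < i + 2*m → g (t+p) + 1 = g t + jz := by
        intro t h1 h2
        have h := H (2*t - i) (by omega)
        rw [show i + m + (2*t - i) = 2*(t+p)+1 by omega,
            show i + (2*t - i) = 2*t by omega, hg1, hg0] at h
        exact h
      have R2 : ∀ t, i ≤ 2*t+1 → 2*t+1 < i + 2*m → g (t+p+1) = g t + 1 + jz := by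
        intro t h1 h2
        have h := H (2*t+1 - i) (by omega)
        rw [show i + m + (2*t+1 - i) = 2*(t+p+1) by omega,
            show i + (2*t+1 - i) = 2*t+1 by omega, hg0, hg1] at h
        exact h
      have C : ∀ t, i ≤ 2*t → 2*t+1 < i + 2*m → g (t+p+1) = g (t+p) + 2 := by
        intro t h1 h2
        have r1 := R1 t h1 (by omega)
        have r2 := R2 t (by omega) h2
        have : g (t+p+1) = (g (t+p) + 1) + jz - jz + 1 := by rw [r1]; rw [r2]; ring
        rw [this]; ring
      obtain ⟨t₀, ht₀⟩ : ∃ t₀, i ≤ 2*t₀ ∧ 2*(t₀+1)+1 < i + 2*m := ⟨(i+1)/2, by omega⟩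
      rcases Nat.even_or_odd (t₀ + p) with ⟨u, hu⟩ | ⟨u, hu⟩
      · have hc := C t₀ ht₀.1 (by omega)
        rw [show t₀ + p + 1 = 2*u+1 by omega, show t₀ + p = 2*u by omega, hg0, hg1] at hc
        exact h21 (add_left_cancel hc).symm
      · have hc := C (t₀+1) (by omega) ht₀.2
        rw [show t₀ + 1 + p + 1 = 2*(u+1)+1 by omega, show t₀ + 1 + p = 2*(u+1) by omega,
            hg0, hg1] at hc
        exact h21 (add_left_cancel hc).symm

/-- If two powers of σ agree at a point where powers detect multiples of N, the
    exponents agree mod N. -/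
lemma pow_apply_cast {A : Type*} (N : ℕ) (σ : Equiv.Perm A) (a₀ : A)
    (hσ : ∀ (a : A) (k : ℕ), (σ ^ k) a = a ↔ N ∣ k) :
    ∀ a b : ℕ, (σ^a) a₀ = (σ^b) a₀ → ((a : ZMod N) = (b : ZMod N)) := by
  have key : ∀ a b : ℕ, b ≤ a → (σ^a) a₀ = (σ^b) a₀ → ((a : ZMod N) = (b : ZMod N)) := by
    intro a b hba hab
    have h1 : (σ^b) ((σ^(a-b)) a₀) = (σ^b) a₀ := by
      rw [← Equiv.Perm.mul_apply, ← pow_add, show b + (a-b) = a by omega]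
      exact hab
    have h2 : (σ^(a-b)) a₀ = a₀ := (Equiv.injective _) h1
    have h3 : N ∣ a - b := (hσ a₀ (a-b)).mp h2
    exact ((ZMod.natCast_eq_natCast_iff _ _ _).mpr ((Nat.modEq_iff_dvd' hba).mpr h3)).symm
  intro a b hab
  rcases le_total b a with h | h
  · exact key a b h hab
  · exact (key b a h hab.symm).symm

/-- Theorem 2.1 of the paper: for σ a single N-cycle on A with
    N = |A| ≥ 3 and δ = σ^j, 1 ≤ j < N, j ≢ 1 (mod N), the infinite word
    W = lim ψ^n(a₀) is strongly (3, δ)-free: no factor of W has the form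
    X X^(δ) X^(δ²) with X nonempty. -/
theorem strongly_three_delta_free {A : Type*} [Fintype A] (N : ℕ)
    (hN : Fintype.card A = N) (hN3 : 3 ≤ N) (σ : Equiv.Perm A)
    (hσ : ∀ (a : A) (k : ℕ), (σ ^ k) a = a ↔ N ∣ k)
    (j : ℕ) (hj1 : 1 ≤ j) (hjN : j < N) (hj : ¬ j ≡ 1 [MOD N])
    (δ : Equiv.Perm A) (hδ : δ = σ ^ j) (a₀ : A) :
    ∀ X : List A, 1 ≤ X.length →
      ¬ IsFactorOf (X ++ twist δ X ++ twist (δ ^ 2) X) (Wfix σ a₀) := by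
  intro X hX hFac
  obtain ⟨i, hi⟩ := hFac
  set W := Wfix σ a₀ with hWdef
  set m := X.length with hm
  -- pointwise consequences of the factor occurrence
  have hlen : (X ++ twist δ X ++ twist (δ ^ 2) X).length = 3*m := by
    simp [twist, hm]; ring
  have hW : ∀ k', k' < 3*m →
      (X ++ twist δ X ++ twist (δ ^ 2) X)[k']? = some (W (i + k')) := by
    intro k' hk'
    conv_lhs => rw [hi]
    rw [List.getElem?_map, List.getElem?_range (by rwa [hlen])]
    rfl
  have h1 : ∀ k, k < m → W (i + m + k) = δ (W (i + k)) := by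
    intro k hk
    have e1 : (X ++ twist δ X ++ twist (δ ^ 2) X)[k]? = X[k]? := by
      rw [List.getElem?_append_left (by simp [twist]; omega)]
      rw [List.getElem?_append_left (by omega)]
    have e2 : (X ++ twist δ X ++ twist (δ ^ 2) X)[m + k]? = X[k]?.map δ := by
      rw [List.getElem?_append_left (by simp [twist]; omega)]
      rw [List.getElem?_append_right (by omega)]
      simp [twist, hm]
    have w1 := hW k (by omega)
    have w2 := hW (m + k) (by omega)
    rw [e1] at w1
    rw [e2, w1] at w2
    simp at w2
    rw [show i + (m + k) = i + m + k by omega] at w2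
    exact w2.symm
  have h2 : ∀ k, k < m → W (i + 2*m + k) = δ (δ (W (i + k))) := by
    intro k hk
    have e1 : (X ++ twist δ X ++ twist (δ ^ 2) X)[k]? = X[k]? := by
      rw [List.getElem?_append_left (by simp [twist]; omega)]
      rw [List.getElem?_append_left (by omega)]
    have e3 : (X ++ twist δ X ++ twist (δ ^ 2) X)[2*m + k]? = X[k]?.map (⇑(δ^2)) := by
      rw [List.getElem?_append_right (by simp [twist]; omega)]
      have hl2 : (X ++ twist δ X).length = 2*m := by simp [twist]; omega
      rw [hl2, show 2*m + k - 2*m = k by omega]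
      simp only [twist, List.getElem?_map]
    have w1 := hW k (by omega)
    have w3 := hW (2*m + k) (by omega)
    rw [e1] at w1
    rw [e3, w1] at w3
    simp at w3
    rw [show i + (2*m + k) = i + 2*m + k by omega] at w3
    rw [w3.symm, sq, Equiv.Perm.mul_apply]
  -- the extended overlap relation
  have hfull : ∀ k, k < 2*m → W (i + m + k) = δ (W (i + k)) := by
    intro k hk
    rcases Nat.lt_or_ge k m with h | h
    · exact h1 k h
    · have hk' : k - m < m := by omega
      have := h2 (k - m) hk'
      rw [show i + 2*m + (k - m) = i + m + k by omega] at this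
      rw [this, ← h1 (k - m) hk', show i + m + (k - m) = i + k by omega]
  -- translate to the digit-sum sequence mod N
  set g : ℕ → ZMod N := fun n => ((dsum n : ℕ) : ZMod N) with hg
  have hg0 : ∀ n, g (2*n) = g n := by intro n; simp [hg, dsum_two_mul]
  have hg1 : ∀ n, g (2*n+1) = g n + 1 := by intro n; simp [hg, dsum_two_mul_add_one]
  have hjz : ((j : ℕ) : ZMod N) ≠ 1 := by
    intro h
    have h' : ((j:ℕ) : ZMod N) = ((1:ℕ) : ZMod N) := by push_cast; exact h
    exact hj ((ZMod.natCast_eq_natCast_iff _ _ _).mp h')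
  refine core N hN3 g hg0 hg1 ((j : ℕ) : ZMod N) hjz m (by omega) i ?_
  intro k hk
  have h := hfull k hk
  rw [hWdef, Wfix_eq, Wfix_eq, hδ] at h
  rw [← Equiv.Perm.mul_apply, ← pow_add] at h
  have hc := pow_apply_cast N σ a₀ hσ _ _ h
  simp only [hg]
  push_cast at hc ⊢
  rw [hc]; ring
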